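/- Suppose the X_j take values in ℕ, let a, b ∈ ℝ be constants, write f_θ(k) := P_θ(X_1 = k), and assume: P(N = n) = (a + b/n) · P(N = n − 1) for every integer n ≥ 1, and for P_Θ-almost all θ ∈ D: (1) P_θ(N = n) = P(N = n) for all n ∈ ℕ; (2) under P_θ the sequence X is independent and identically distributed; (3) σ(N) and σ(X_1, X_2, …) are independent under P_θ; (4) a · f_θ(0) < 1. Then P(S = 0) = Σ_{n=0}^∞ P(N = n) · ∫_D (f_θ(0))^n dP_Θ(θ), and for every integer x ≥ 1, P(S = x) = Σ_{y=1}^{x} (a + b·y/x) · ∫_Ω 1_{{S = x − y}}(ω) · f_{Θ(ω)}(y) / (1 − a · f_{Θ(ω)}(0)) dP(ω). -/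

import Mathlib

open MeasureTheory ProbabilityTheory Filter
open scoped ENNReal NNReal
set_option linter.unusedSectionVars false
set_option linter.unusedVariables false
set_option maxHeartbeats 1000000

namespace PanjerAux

lemma sum_range_swap' (F : ℕ → ℕ → ℝ≥0∞) (x : ℕ) :
    ∑ y ∈ Finset.range (x+1), ∑ z ∈ Finset.range (x+1-y), F y z
      = ∑ z ∈ Finset.range (x+1), ∑ y ∈ Finset.range (x+1-z), F y z := by
  rw [Finset.sum_sigma', Finset.sum_sigma']
  refine Finset.sum_nbij' (fun p => ⟨p.2, p.1⟩) (fun p => ⟨p.2, p.1⟩) ?_ ?_ ?_ ?_ ?_ <;>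
    intro p hp <;>
    simp only [Finset.mem_sigma, Finset.mem_range] at * <;> omega

lemma range_succ_eq_insert_Icc (x : ℕ) : Finset.range (x+1) = insert 0 (Finset.Icc 1 x) := by
  ext y; simp [Finset.mem_range, Finset.mem_Icc]; omega

lemma K_bounds (a f0 fy : ℝ) (ha : a ≤ 1) (hf0 : 0 ≤ f0) (hfy : 0 ≤ fy)
    (hsum : f0 + fy ≤ 1) (hnd : a * f0 < 1) :
    0 ≤ fy / (1 - a * f0) ∧ fy / (1 - a * f0) ≤ 1 := by
  have hd : 0 < 1 - a * f0 := by linarith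
  refine ⟨div_nonneg hfy hd.le, ?_⟩
  rw [div_le_one hd]
  nlinarith

section PerMeasure

variable {Ω : Type*} [MeasurableSpace Ω] (μ : Measure Ω) [IsProbabilityMeasure μ]
  (X : ℕ → Ω → ℕ) (N : Ω → ℕ)

lemma meas_Sn (hX : ∀ j, Measurable (X j)) (n x : ℕ) :
    MeasurableSet {ω | (∑ j ∈ Finset.range n, X j ω) = x} := by
  have : Measurable fun ω => ∑ j ∈ Finset.range n, X j ω :=
    Finset.measurable_sum _ (fun j _ => hX j)
  exact this (measurableSet_singleton x)

lemma conv_step (hX : ∀ j, Measurable (X j))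
    (hiid : iIndepFun X μ)
    (hmap : ∀ j, μ.map (X j) = μ.map (X 0)) (n x : ℕ) :
    μ {ω | (∑ j ∈ Finset.range (n+1), X j ω) = x}
      = ∑ y ∈ Finset.range (x+1),
          μ {ω | X 0 ω = y} * μ {ω | (∑ j ∈ Finset.range n, X j ω) = x - y} := by
  have hindep : IndepFun (∑ j ∈ Finset.range n, X j) (X n) μ :=
    hiid.indepFun_sum_range_succ hX n
  have hset : {ω | (∑ j ∈ Finset.range (n+1), X j ω) = x}
      = ⋃ y ∈ Finset.range (x+1),
          ((X n) ⁻¹' {y} ∩ (∑ j ∈ Finset.range n, X j) ⁻¹' {x - y}) := by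
    ext ω
    simp only [Set.mem_setOf_eq, Set.mem_iUnion, Finset.mem_range, Set.mem_inter_iff,
      Set.mem_preimage, Set.mem_singleton_iff, Finset.sum_apply, Finset.sum_range_succ]
    constructor
    · intro h
      exact ⟨X n ω, by omega, rfl, by omega⟩
    · rintro ⟨y, hy, h1, h2⟩
      omega
  rw [hset, measure_biUnion_finset]
  · refine Finset.sum_congr rfl fun y hy => ?_
    rw [Set.inter_comm, hindep.measure_inter_preimage_eq_mul _ _
      (measurableSet_singleton _) (measurableSet_singleton _)]
    have h1 : μ ((X n) ⁻¹' {y}) = μ ((X 0) ⁻¹' {y}) := by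
      rw [← Measure.map_apply (hX n) (measurableSet_singleton _), hmap n,
        Measure.map_apply (hX 0) (measurableSet_singleton _)]
    have h2 : ((∑ j ∈ Finset.range n, X j) ⁻¹' {x - y} : Set Ω)
        = {ω | (∑ j ∈ Finset.range n, X j ω) = x - y} := by
      ext ω; simp [Finset.sum_apply]
    have h3 : ((X 0) ⁻¹' {y} : Set Ω) = {ω | X 0 ω = y} := rfl
    rw [mul_comm, h1, h2, h3]
  · intro y hy z hz hyz
    simp only [Set.disjoint_left]
    rintro ω ⟨h1, _⟩ ⟨h2, _⟩
    exact hyz (h1 ▸ h2 ▸ rfl)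
  · intro y hy
    have hsm : Measurable (∑ j ∈ Finset.range n, X j) := by
      have : (∑ j ∈ Finset.range n, X j) = fun ω => ∑ j ∈ Finset.range n, X j ω := by
        ext ω; simp [Finset.sum_apply]
      rw [this]; exact Finset.measurable_sum _ (fun j _ => hX j)
    exact ((hX n) (measurableSet_singleton _)).inter (hsm (measurableSet_singleton _))

lemma sym_step (hX : ∀ j, Measurable (X j))
    (hiid : iIndepFun X μ)
    (hmap : ∀ j, μ.map (X j) = μ.map (X 0)) (n : ℕ) : ∀ x : ℕ,
    (x : ℝ≥0∞) * μ {ω | (∑ j ∈ Finset.range (n+1), X j ω) = x}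
      = ((n:ℝ≥0∞)+1) * ∑ y ∈ Finset.range (x+1),
          (y : ℝ≥0∞) * μ {ω | X 0 ω = y} * μ {ω | (∑ j ∈ Finset.range n, X j ω) = x - y} := by
  induction n with
  | zero =>
    intro x
    rw [conv_step μ X hX hiid hmap 0 x, Finset.mul_sum, Finset.mul_sum]
    refine Finset.sum_congr rfl fun y hy => ?_
    simp only [Finset.mem_range] at hy
    rcases eq_or_ne y x with h | h
    · subst h; simp [mul_comm, mul_assoc, mul_left_comm]
    · have hxy : x - y ≠ 0 := by omega
      have : {ω : Ω | (∑ j ∈ Finset.range 0, X j ω) = x - y} = ∅ := by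
        ext ω; simp [Finset.sum_range_zero]; omega
      rw [this]; simp
  | succ n IH =>
    intro x
    rw [conv_step μ X hX hiid hmap (n+1) x, Finset.mul_sum]
    have key : ∀ y ∈ Finset.range (x+1),
        (x : ℝ≥0∞) * (μ {ω | X 0 ω = y} * μ {ω | (∑ j ∈ Finset.range (n+1), X j ω) = x - y})
        = (y : ℝ≥0∞) * μ {ω | X 0 ω = y} * μ {ω | (∑ j ∈ Finset.range (n+1), X j ω) = x - y}
          + μ {ω | X 0 ω = y} * (((x - y : ℕ) : ℝ≥0∞)
              * μ {ω | (∑ j ∈ Finset.range (n+1), X j ω) = x - y}) := by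
      intro y hy
      simp only [Finset.mem_range] at hy
      have hx : (x : ℝ≥0∞) = (y : ℝ≥0∞) + ((x - y : ℕ) : ℝ≥0∞) := by
        rw [← Nat.cast_add]; congr 1; omega
      rw [hx]; ring
    rw [Finset.sum_congr rfl key, Finset.sum_add_distrib]
    have IH' : ∀ y ∈ Finset.range (x+1),
        μ {ω | X 0 ω = y} * (((x - y : ℕ) : ℝ≥0∞)
            * μ {ω | (∑ j ∈ Finset.range (n+1), X j ω) = x - y})
        = ((n:ℝ≥0∞)+1) * (μ {ω | X 0 ω = y} * ∑ z ∈ Finset.range (x+1-y),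
            (z : ℝ≥0∞) * μ {ω | X 0 ω = z}
              * μ {ω | (∑ j ∈ Finset.range n, X j ω) = x - y - z}) := by
      intro y hy
      simp only [Finset.mem_range] at hy
      have hr : x + 1 - y = (x - y) + 1 := by omega
      rw [IH (x - y), hr]; ring
    rw [Finset.sum_congr rfl IH', ← Finset.mul_sum]
    have swap : ∑ y ∈ Finset.range (x+1), (μ {ω | X 0 ω = y} * ∑ z ∈ Finset.range (x+1-y),
            (z : ℝ≥0∞) * μ {ω | X 0 ω = z}
              * μ {ω | (∑ j ∈ Finset.range n, X j ω) = x - y - z})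
        = ∑ z ∈ Finset.range (x+1), (z : ℝ≥0∞) * μ {ω | X 0 ω = z}
            * μ {ω | (∑ j ∈ Finset.range (n+1), X j ω) = x - z} := by
      have := sum_range_swap' (fun y z => μ {ω | X 0 ω = y} * ((z : ℝ≥0∞) * μ {ω | X 0 ω = z}
              * μ {ω | (∑ j ∈ Finset.range n, X j ω) = x - y - z})) x
      simp only [Finset.mul_sum]
      rw [this]
      refine Finset.sum_congr rfl fun z hz => ?_
      simp only [Finset.mem_range] at hz
      rw [conv_step μ X hX hiid hmap n (x - z)]
      have hr : x + 1 - z = (x - z) + 1 := by omega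
      rw [hr, Finset.mul_sum]
      refine Finset.sum_congr rfl fun y hy => ?_
      have : x - y - z = x - z - y := by omega
      rw [this]; ring
    rw [swap]
    push_cast
    ring

lemma mix_step (hX : ∀ j, Measurable (X j)) (hN : Measurable N)
    (hInd : Indep (MeasurableSpace.comap N inferInstance)
      (MeasurableSpace.comap (fun ω (k : ℕ) => X k ω) inferInstance) μ) (z : ℕ) :
    μ {ω | (∑ j ∈ Finset.range (N ω), X j ω) = z}
      = ∑' n : ℕ, μ {ω | N ω = n} * μ {ω | (∑ j ∈ Finset.range n, X j ω) = z} := by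
  have hset : {ω | (∑ j ∈ Finset.range (N ω), X j ω) = z}
      = ⋃ n : ℕ, ({ω | N ω = n} ∩ {ω | (∑ j ∈ Finset.range n, X j ω) = z}) := by
    ext ω
    simp only [Set.mem_setOf_eq, Set.mem_iUnion, Set.mem_inter_iff]
    exact ⟨fun h => ⟨N ω, rfl, h⟩, fun ⟨n, h1, h2⟩ => by rw [← h1] at h2; exact h2⟩
  rw [hset, measure_iUnion]
  · refine tsum_congr fun n => ?_
    have hInd' := (Indep_iff _ _ _).mp hInd
    have h1 : MeasurableSet[MeasurableSpace.comap N inferInstance] {ω | N ω = n} :=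
      ⟨{n}, measurableSet_singleton n, rfl⟩
    have h2 : MeasurableSet[MeasurableSpace.comap (fun ω (k : ℕ) => X k ω) inferInstance]
        {ω | (∑ j ∈ Finset.range n, X j ω) = z} := by
      refine ⟨{h : ℕ → ℕ | (∑ j ∈ Finset.range n, h j) = z}, ?_, rfl⟩
      exact (Finset.measurable_sum _ fun j _ => measurable_pi_apply j)
        (measurableSet_singleton z)
    exact hInd' _ _ h1 h2
  · intro m n hmn
    simp only [Set.disjoint_left]
    rintro ω ⟨h1, _⟩ ⟨h2, _⟩
    exact hmn (h1 ▸ h2 ▸ rfl)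
  · intro n
    exact ((hN (measurableSet_singleton n))).inter
      ((Finset.measurable_sum _ fun j _ => hX j) (measurableSet_singleton z))

lemma g_zero_pow (hX : ∀ j, Measurable (X j))
    (hiid : iIndepFun X μ)
    (hmap : ∀ j, μ.map (X j) = μ.map (X 0)) (n : ℕ) :
    μ {ω | (∑ j ∈ Finset.range n, X j ω) = 0} = (μ {ω | X 0 ω = 0}) ^ n := by
  induction n with
  | zero =>
    have : {ω : Ω | (∑ j ∈ Finset.range 0, X j ω) = 0} = Set.univ := by
      ext ω; simp
    rw [this]; simp
  | succ n IH =>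
    rw [conv_step μ X hX hiid hmap n 0]
    rw [show (0:ℕ)+1 = 1 from rfl, Finset.range_one, Finset.sum_singleton, Nat.sub_zero,
      IH, pow_succ]
    ring

lemma panjer_core (a b : ℝ)
    (conv : ∀ (n x : ℕ), μ {ω | (∑ j ∈ Finset.range (n+1), X j ω) = x}
      = ∑ y ∈ Finset.range (x+1),
          μ {ω | X 0 ω = y} * μ {ω | (∑ j ∈ Finset.range n, X j ω) = x - y})
    (sym : ∀ (n x : ℕ), (x : ℝ≥0∞) * μ {ω | (∑ j ∈ Finset.range (n+1), X j ω) = x}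
      = ((n:ℝ≥0∞)+1) * ∑ y ∈ Finset.range (x+1),
          (y : ℝ≥0∞) * μ {ω | X 0 ω = y} * μ {ω | (∑ j ∈ Finset.range n, X j ω) = x - y})
    (mix : ∀ z : ℕ, μ {ω | (∑ j ∈ Finset.range (N ω), X j ω) = z}
      = ∑' n : ℕ, μ {ω | N ω = n} * μ {ω | (∑ j ∈ Finset.range n, X j ω) = z})
    (hq : ∀ n : ℕ, 1 ≤ n →
      (μ {ω | N ω = n}).toReal = (a + b / (n : ℝ)) * (μ {ω | N ω = n - 1}).toReal)
    (x : ℕ) (hx : 1 ≤ x) :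
    (μ {ω | (∑ j ∈ Finset.range (N ω), X j ω) = x}).toReal
        * (1 - a * (μ {ω | X 0 ω = 0}).toReal)
      = ∑ y ∈ Finset.Icc 1 x, (a + b * (y:ℝ) / (x:ℝ))
          * ((μ {ω | X 0 ω = y}).toReal
            * (μ {ω | (∑ j ∈ Finset.range (N ω), X j ω) = x - y}).toReal) := by
  classical
  set q : ℕ → ℝ := fun n => (μ {ω | N ω = n}).toReal with hq_def
  set g : ℕ → ℕ → ℝ := fun n z => (μ {ω | (∑ j ∈ Finset.range n, X j ω) = z}).toReal
    with hg_def
  set f : ℕ → ℝ := fun y => (μ {ω | X 0 ω = y}).toReal with hf_def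
  set s : ℕ → ℝ := fun z => (μ {ω | (∑ j ∈ Finset.range (N ω), X j ω) = z}).toReal
    with hs_def
  have hfin : ∀ E : Set Ω, μ E ≠ ∞ := fun E => measure_ne_top μ E
  have hsumm : ∀ z : ℕ, Summable (fun n => q n * g n z) := by
    intro z
    have : (∑' n : ℕ, μ {ω | N ω = n} * μ {ω | (∑ j ∈ Finset.range n, X j ω) = z}) ≠ ∞ := by
      rw [← mix z]; exact hfin _
    have h2 := ENNReal.summable_toReal this
    simpa [ENNReal.toReal_mul] using h2
  have hS : ∀ z : ℕ, s z = ∑' n : ℕ, q n * g n z := by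
    intro z
    rw [hs_def]
    simp only
    rw [mix z, ENNReal.tsum_toReal_eq (fun n => by
      exact ENNReal.mul_ne_top (hfin _) (hfin _))]
    exact tsum_congr fun n => ENNReal.toReal_mul
  have convR : ∀ n z : ℕ, g (n+1) z = ∑ y ∈ Finset.range (z+1), f y * g n (z - y) := by
    intro n z
    rw [hg_def]; simp only
    rw [conv n z, ENNReal.toReal_sum (fun y _ => ENNReal.mul_ne_top (hfin _) (hfin _))]
    exact Finset.sum_congr rfl fun y _ => ENNReal.toReal_mul
  have symR : ∀ n z : ℕ, (z:ℝ) * g (n+1) z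
      = ((n:ℝ)+1) * ∑ y ∈ Finset.range (z+1), (y:ℝ) * f y * g n (z - y) := by
    intro n z
    have := sym n z
    have h1 := congrArg ENNReal.toReal this
    rw [ENNReal.toReal_mul, ENNReal.toReal_mul] at h1
    rw [show ((z:ℝ≥0∞)).toReal = (z:ℝ) by simp] at h1
    rw [show (((n:ℝ≥0∞))+1).toReal = ((n:ℝ)+1) by simp [ENNReal.toReal_add]] at h1
    rw [hg_def, hf_def]; simp only
    rw [h1, ENNReal.toReal_sum (fun y _ => by
      exact ENNReal.mul_ne_top (ENNReal.mul_ne_top (by simp) (hfin _)) (hfin _))]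
    congr 1
    refine Finset.sum_congr rfl fun y _ => ?_
    rw [ENNReal.toReal_mul, ENNReal.toReal_mul]
    simp
  have hxne : (x:ℝ) ≠ 0 := Nat.cast_ne_zero.mpr (by omega)
  have keyn : ∀ n : ℕ, q (n+1) * g (n+1) x
      = ∑ y ∈ Finset.range (x+1), (a + b * (y:ℝ) / (x:ℝ)) * f y * (q n * g n (x - y)) := by
    intro n
    have hq' : q (n+1) = (a + b / ((n:ℝ)+1)) * q n := by
      have := hq (n+1) (by omega)
      simpa using this
    have hnne : ((n:ℝ)+1) ≠ 0 := by positivity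
    set A := ∑ y ∈ Finset.range (x+1), f y * g n (x - y) with hA
    set B := ∑ y ∈ Finset.range (x+1), (y:ℝ) * f y * g n (x - y) with hB
    have hgA : g (n+1) x = A := convR n x
    have hxAB : (x:ℝ) * A = ((n:ℝ)+1) * B := by rw [← hgA, symR n x]
    have expand : ∑ y ∈ Finset.range (x+1), (a + b * (y:ℝ) / (x:ℝ)) * f y * (q n * g n (x - y))
        = q n * (a * A + (b / (x:ℝ)) * B) := by
      rw [hA, hB, Finset.mul_sum, Finset.mul_sum, ← Finset.sum_add_distrib, Finset.mul_sum]
      refine Finset.sum_congr rfl fun y _ => ?_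
      field_simp
    rw [expand, hq', hgA]
    have hbA : (b / ((n:ℝ)+1)) * A = (b / (x:ℝ)) * B := by
      rw [div_mul_eq_mul_div, div_mul_eq_mul_div, div_eq_div_iff hnne hxne]
      calc b * A * (x:ℝ) = b * ((x:ℝ) * A) := by ring
        _ = b * (((n:ℝ)+1) * B) := by rw [hxAB]
        _ = b * B * ((n:ℝ)+1) := by ring
    calc (a + b / ((n:ℝ)+1)) * q n * A = q n * (a * A + (b / ((n:ℝ)+1)) * A) := by ring
      _ = q n * (a * A + (b / (x:ℝ)) * B) := by rw [hbA]
  have hg0 : g 0 x = 0 := by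
    rw [hg_def]; simp only
    have : {ω : Ω | (∑ j ∈ Finset.range 0, X j ω) = x} = ∅ := by
      ext ω; simp [Finset.sum_range_zero]; omega
    rw [this]; simp
  have hsx : s x = ∑' n : ℕ, q (n+1) * g (n+1) x := by
    rw [hS x, Summable.tsum_eq_zero_add (hsumm x), hg0]
    simp
  have hswap : s x = ∑ y ∈ Finset.range (x+1), (a + b * (y:ℝ) / (x:ℝ)) * f y * s (x - y) := by
    rw [hsx]
    rw [tsum_congr keyn, Summable.tsum_finsetSum (fun y _ => (hsumm (x - y)).mul_left _)]
    exact Finset.sum_congr rfl fun y _ => by rw [hS (x - y)]; exact tsum_mul_left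
  have hsplit0 : ∑ y ∈ Finset.range (x+1), (a + b * (y:ℝ) / (x:ℝ)) * f y * s (x - y)
      = a * f 0 * s x
        + ∑ y ∈ Finset.Icc 1 x, (a + b * (y:ℝ) / (x:ℝ)) * f y * s (x - y) := by
    rw [range_succ_eq_insert_Icc x, Finset.sum_insert (by simp)]
    simp only [Nat.cast_zero, mul_zero, zero_div, zero_mul, add_zero, Nat.sub_zero]
  have hsplit : s x = a * f 0 * s x
      + ∑ y ∈ Finset.Icc 1 x, (a + b * (y:ℝ) / (x:ℝ)) * f y * s (x - y) :=
    hswap.trans hsplit0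
  have : s x * (1 - a * f 0)
      = ∑ y ∈ Finset.Icc 1 x, (a + b * (y:ℝ) / (x:ℝ)) * f y * s (x - y) := by
    nlinarith [hsplit]
  rw [this]
  exact Finset.sum_congr rfl fun y _ => by ring

end PerMeasure

lemma disint {Ω : Type*} [MeasurableSpace Ω] (P : Measure Ω) [IsProbabilityMeasure P]
    (d : ℕ) (Θ : Ω → (Fin d → ℝ)) (hΘ : Measurable Θ)
    (Pθ : (Fin d → ℝ) → Measure Ω) (hPθprob : ∀ θ, IsProbabilityMeasure (Pθ θ))
    (hmeas : ∀ E : Set Ω, MeasurableSet E → Measurable fun θ => Pθ θ E)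
    (hint : ∀ E : Set Ω, MeasurableSet E → ∫⁻ θ, Pθ θ E ∂(P.map Θ) = P E)
    (hcons : ∀ B : Set (Fin d → ℝ), MeasurableSet B →
      ∀ᵐ θ ∂((P.map Θ).restrict B), Pθ θ (Θ ⁻¹' B) = 1)
    (E : Set Ω) (hE : MeasurableSet E) :
    (P.restrict E).map Θ = (P.map Θ).withDensity (fun θ => Pθ θ E) := by
  refine Measure.ext fun B hB => ?_
  rw [Measure.map_apply hΘ hB, Measure.restrict_apply (hΘ hB),
    withDensity_apply _ hB]
  rw [← hint _ ((hΘ hB).inter hE)]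
  have h1 : ∀ᵐ θ ∂(P.map Θ), θ ∈ B → Pθ θ (Θ ⁻¹' B) = 1 :=
    (ae_restrict_iff' hB).mp (hcons B hB)
  have h2 : ∀ᵐ θ ∂(P.map Θ), θ ∈ Bᶜ → Pθ θ (Θ ⁻¹' Bᶜ) = 1 :=
    (ae_restrict_iff' hB.compl).mp (hcons Bᶜ hB.compl)
  have hae : ∀ᵐ θ ∂(P.map Θ),
      Pθ θ (Θ ⁻¹' B ∩ E) = B.indicator (fun θ => Pθ θ E) θ := by
    filter_upwards [h1, h2] with θ hθ1 hθ2
    haveI := hPθprob θ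
    by_cases hθB : θ ∈ B
    · rw [Set.indicator_of_mem hθB, Set.inter_comm]
      refine measure_inter_conull ?_
      rw [measure_compl (hΘ hB) (measure_ne_top _ _), hθ1 hθB, measure_univ, tsub_self]
    · rw [Set.indicator_of_notMem hθB]
      have hc : Pθ θ (Θ ⁻¹' B) = 0 := by
        have := hθ2 hθB
        rw [Set.preimage_compl] at this
        exact (prob_compl_eq_one_iff (hΘ hB)).mp this
      exact le_antisymm (le_trans (measure_mono Set.inter_subset_left) hc.le) zero_le
  rw [lintegral_congr_ae hae]
  exact lintegral_indicator hB _

lemma N_partition {Ω : Type*} [MeasurableSpace Ω] (P : Measure Ω) [IsProbabilityMeasure P]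
    (N : Ω → ℕ) (hN : Measurable N) :
    ∑' n : ℕ, P {ω | N ω = n} = 1 := by
  have : (⋃ n : ℕ, {ω | N ω = n}) = Set.univ := by
    ext ω; simp
  rw [← measure_univ (μ := P), ← this, measure_iUnion]
  · intro m n hmn
    simp only [Set.disjoint_left]
    rintro ω h1 h2
    exact hmn ((h1 : N ω = m) ▸ (h2 : N ω = n) ▸ rfl)
  · exact fun n => hN (measurableSet_singleton n)

lemma panjer_degenerate {Ω : Type*} [MeasurableSpace Ω] (P : Measure Ω)
    [IsProbabilityMeasure P] (N : Ω → ℕ) (hN : Measurable N) (a b : ℝ)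
    (hPanjer : ∀ n : ℕ, 1 ≤ n →
      (P {ω | N ω = n}).toReal = (a + b / (n : ℝ)) * (P {ω | N ω = n - 1}).toReal)
    (ha : 1 < a) :
    (∀ n : ℕ, 1 ≤ n → P {ω | N ω = n} = 0) ∧ a + b = 0 := by
  set q : ℕ → ℝ := fun n => (P {ω | N ω = n}).toReal with hq_def
  have hqnn : ∀ n, 0 ≤ q n := fun n => ENNReal.toReal_nonneg
  have htsum : ∑' n : ℕ, P {ω | N ω = n} = 1 := N_partition P N hN
  have hsumm : Summable q := by
    apply ENNReal.summable_toReal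
    rw [htsum]; exact ENNReal.one_ne_top
  have hfin : ∀ n, P {ω | N ω = n} ≠ ∞ := fun n => measure_ne_top _ _
  have hq1 : q 1 = 0 := by
    by_contra h
    have hq1pos : 0 < q 1 := lt_of_le_of_ne (hqnn 1) (Ne.symm h)
    have h10 : q 1 = (a + b) * q 0 := by
      have := hPanjer 1 le_rfl
      simpa using this
    have hq0pos : 0 < q 0 := by
      rcases lt_or_eq_of_le (hqnn 0) with h' | h'
      · exact h'
      · exfalso; rw [← h'] at h10; simp at h10; linarith
    have habpos : 0 < a + b := by nlinarith
    have hpos : ∀ n, 1 ≤ n → 0 < q n := by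
      intro n hn
      induction n, hn using Nat.le_induction with
      | base => exact hq1pos
      | succ n hn IH =>
        have hrec : q (n+1) = (a + b / ((n:ℝ)+1)) * q n := by
          have := hPanjer (n+1) (by omega)
          simpa using this
        rcases lt_or_eq_of_le (hqnn (n+1)) with h' | h'
        · exact h'
        · exfalso
          have hmul : (a + b / ((n:ℝ)+1)) * q n = 0 := by rw [← hrec, ← h']
          have hc : a + b / ((n:ℝ)+1) = 0 := by
            rcases mul_eq_zero.mp hmul with hc | hc
            · exact hc
            · exact absurd hc (ne_of_gt IH)
          have hb : b = -(a * ((n:ℝ)+1)) := by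
            have hne : ((n:ℝ)+1) ≠ 0 := by positivity
            field_simp at hc
            linarith
          have hn1 : (1:ℝ) ≤ (n:ℝ) := by exact_mod_cast hn
          nlinarith
    obtain ⟨K, hK1, hKprop⟩ : ∃ K : ℕ, 1 ≤ K ∧ ∀ k : ℕ, K ≤ k → 1 ≤ a + b / (k:ℝ) := by
      refine ⟨max 1 (⌈|b| / (a - 1)⌉₊ + 1), le_max_left _ _, fun k hk => ?_⟩
      have hk1 : 1 ≤ k := le_trans (le_max_left _ _) hk
      have hkpos : (0:ℝ) < k := by exact_mod_cast hk1
      have hkceil : (⌈|b| / (a - 1)⌉₊ : ℝ) ≤ (k:ℝ) := by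
        have : ⌈|b| / (a - 1)⌉₊ + 1 ≤ k := le_trans (le_max_right _ _) hk
        exact_mod_cast le_trans (Nat.le_succ _) this
      have hbk : |b| / (a - 1) ≤ (k:ℝ) := le_trans (Nat.le_ceil _) hkceil
      have ha1 : (0:ℝ) < a - 1 := by linarith
      have h1 : |b| ≤ (a - 1) * (k:ℝ) := by
        rw [div_le_iff₀ ha1] at hbk; linarith [hbk]
      have h2 : (1 - a) * (k:ℝ) ≤ b := by
        have := neg_abs_le b
        nlinarith
      have : (1 - a) ≤ b / (k:ℝ) := (le_div_iff₀ hkpos).mpr h2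
      linarith
    have hmono : ∀ m : ℕ, q K ≤ q (K + m) := by
      intro m
      induction m with
      | zero => simp
      | succ m IH =>
        have hrec : q (K + m + 1) = (a + b / ((K + m + 1 : ℕ):ℝ)) * q (K + m) := by
          have := hPanjer (K + m + 1) (by omega)
          simpa using this
        have hc : 1 ≤ a + b / ((K + m + 1 : ℕ):ℝ) := hKprop _ (by omega)
        have := hpos (K + m) (by omega)
        calc q K ≤ q (K + m) := IH
          _ = 1 * q (K + m) := (one_mul _).symm
          _ ≤ (a + b / ((K + m + 1 : ℕ):ℝ)) * q (K + m) := by nlinarith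
          _ = q (K + (m + 1)) := by rw [← hrec]; ring_nf
    have hKpos : 0 < q K := hpos K hK1
    have hlim : Tendsto q atTop (nhds 0) := hsumm.tendsto_atTop_zero
    have hev : ∀ᶠ n in atTop, q n < q K := hlim.eventually_lt_const hKpos
    obtain ⟨n, hn1, hn2⟩ := (hev.and (eventually_ge_atTop K)).exists
    have : q K ≤ q n := by
      have := hmono (n - K)
      rwa [Nat.add_sub_cancel' hn2] at this
    linarith
  have hqall : ∀ n : ℕ, 1 ≤ n → q n = 0 := by
    intro n hn
    induction n, hn using Nat.le_induction with
    | base => exact hq1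
    | succ n hn IH =>
      have hrec : q (n+1) = (a + b / ((n:ℝ)+1)) * q n := by
        have := hPanjer (n+1) (by omega)
        simpa using this
      rw [hrec, IH, mul_zero]
  have hzero : ∀ n : ℕ, 1 ≤ n → P {ω | N ω = n} = 0 := by
    intro n hn
    have := hqall n hn
    rcases (ENNReal.toReal_eq_zero_iff _).mp this with h | h
    · exact h
    · exact absurd h (hfin n)
  refine ⟨hzero, ?_⟩
  have hq0 : q 0 = 1 := by
    have h1 : (∑' n : ℕ, q n) = 1 := by
      rw [hq_def]
      rw [← ENNReal.tsum_toReal_eq hfin, htsum]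
      simp
    have h2 : (∑' n : ℕ, q n) = q 0 := by
      refine tsum_eq_single 0 fun n hn => ?_
      exact hqall n (by omega)
    rw [← h2, h1]
  have h10 : q 1 = (a + b) * q 0 := by
    have := hPanjer 1 le_rfl
    simpa using this
  rw [hq1, hq0, mul_one] at h10
  linarith

end PanjerAux

open PanjerAux in
/-- Panjer recursion for a compound Panjer(a, b; 0) distribution with
exchangeable (conditionally i.i.d.) ℕ-valued claim sizes, the claim number being
independent of the structural parameter `Θ`. -/
theorem compound_panjer_exchangeable_recursion
    {Ω : Type*} [MeasurableSpace Ω] (P : Measure Ω) [IsProbabilityMeasure P]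
    (d : ℕ) (hd : 1 ≤ d) (D : Set (Fin d → ℝ)) (hD : MeasurableSet D)
    (Θ : Ω → (Fin d → ℝ)) (hΘ : Measurable Θ) (hΘD : ∀ ω, Θ ω ∈ D)
    (Pθ : (Fin d → ℝ) → Measure Ω) (hPθprob : ∀ θ, IsProbabilityMeasure (Pθ θ))
    (hmeas : ∀ E : Set Ω, MeasurableSet E → Measurable fun θ => Pθ θ E)
    (hint : ∀ E : Set Ω, MeasurableSet E → ∫⁻ θ, Pθ θ E ∂(P.map Θ) = P E)
    (hcons : ∀ B : Set (Fin d → ℝ), MeasurableSet B →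
      ∀ᵐ θ ∂((P.map Θ).restrict B), Pθ θ (Θ ⁻¹' B) = 1)
    (N : Ω → ℕ) (hN : Measurable N)
    (X : ℕ → Ω → ℕ) (hX : ∀ j, Measurable (X j))
    (a b : ℝ)
    (hPanjer : ∀ n : ℕ, 1 ≤ n →
      (P {ω | N ω = n}).toReal = (a + b / (n : ℝ)) * (P {ω | N ω = n - 1}).toReal)
    (hae : ∀ᵐ θ ∂(P.map Θ),
      -- (1) the conditional claim number distribution coincides with the unconditional one
      (∀ n : ℕ, Pθ θ {ω | N ω = n} = P {ω | N ω = n})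
      -- (2) conditionally i.i.d. claim sizes
      ∧ (iIndepFun X (Pθ θ)
          ∧ ∀ j : ℕ, (Pθ θ).map (X j) = (Pθ θ).map (X 0))
      -- (3) conditional independence of claim number and claim sizes
      ∧ Indep (MeasurableSpace.comap N inferInstance)
          (MeasurableSpace.comap (fun ω (k : ℕ) => X k ω) inferInstance) (Pθ θ)
      -- (4) nondegeneracy
      ∧ a * (Pθ θ {ω | X 0 ω = 0}).toReal < 1) :
    ((P {ω | (∑ j ∈ Finset.range (N ω), X j ω) = 0}).toReal
        = ∑' n : ℕ, (P {ω | N ω = n}).toReal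
            * ∫ θ, ((Pθ θ {ω | X 0 ω = 0}).toReal) ^ n ∂(P.map Θ))
    ∧ ∀ x : ℕ, 1 ≤ x →
        (P {ω | (∑ j ∈ Finset.range (N ω), X j ω) = x}).toReal
          = ∑ y ∈ Finset.Icc 1 x, (a + b * (y : ℝ) / (x : ℝ))
              * ∫ ω, Set.indicator {ω' | (∑ j ∈ Finset.range (N ω'), X j ω') = x - y}
                  (fun _ => (1 : ℝ)) ω
                * (Pθ (Θ ω) {ω' | X 0 ω' = y}).toReal
                / (1 - a * (Pθ (Θ ω) {ω' | X 0 ω' = 0}).toReal) ∂P := by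
  classical
  haveI hPM : IsProbabilityMeasure (P.map Θ) := Measure.isProbabilityMeasure_map hΘ.aemeasurable
  have hXset : ∀ y : ℕ, MeasurableSet {ω | X 0 ω = y} :=
    fun y => hX 0 (measurableSet_singleton y)
  have hNset : ∀ n : ℕ, MeasurableSet {ω | N ω = n} :=
    fun n => hN (measurableSet_singleton n)
  have hSPmeas : ∀ z : ℕ, MeasurableSet {ω | (∑ j ∈ Finset.range (N ω), X j ω) = z} := by
    intro z
    have hset : {ω | (∑ j ∈ Finset.range (N ω), X j ω) = z}
        = ⋃ n : ℕ, ({ω | N ω = n} ∩ {ω | (∑ j ∈ Finset.range n, X j ω) = z}) := by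
      ext ω
      simp only [Set.mem_setOf_eq, Set.mem_iUnion, Set.mem_inter_iff]
      exact ⟨fun h => ⟨N ω, rfl, h⟩, fun ⟨n, h1, h2⟩ => by rw [← h1] at h2; exact h2⟩
    rw [hset]
    exact MeasurableSet.iUnion fun n => (hNset n).inter (meas_Sn X hX n z)
  constructor
  · -- first conclusion
    have h1 : ∀ᵐ θ ∂(P.map Θ), Pθ θ {ω | (∑ j ∈ Finset.range (N ω), X j ω) = 0}
        = ∑' n : ℕ, P {ω | N ω = n} * (Pθ θ {ω | X 0 ω = 0}) ^ n := by
      filter_upwards [hae] with θ hθ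
      obtain ⟨hc1, ⟨hiid, hmap⟩, hInd, hnd⟩ := hθ
      haveI := hPθprob θ
      rw [mix_step (Pθ θ) X N hX hN hInd 0]
      refine tsum_congr fun n => ?_
      rw [hc1 n, g_zero_pow (Pθ θ) X hX hiid hmap n]
    have hpm : ∀ n : ℕ, Measurable fun θ => (Pθ θ {ω | X 0 ω = 0}) ^ n :=
      fun n => (hmeas _ (hXset 0)).pow_const n
    have hlin : ∫⁻ θ, Pθ θ {ω | (∑ j ∈ Finset.range (N ω), X j ω) = 0} ∂(P.map Θ)
        = ∑' n : ℕ, P {ω | N ω = n} * ∫⁻ θ, (Pθ θ {ω | X 0 ω = 0}) ^ n ∂(P.map Θ) := by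
      rw [lintegral_congr_ae h1,
        lintegral_tsum (fun n => ((hpm n).const_mul _).aemeasurable)]
      exact tsum_congr fun n => lintegral_const_mul _ (hpm n)
    have hle1 : ∀ n : ℕ, ∫⁻ θ, (Pθ θ {ω | X 0 ω = 0}) ^ n ∂(P.map Θ) ≤ 1 := by
      intro n
      calc ∫⁻ θ, (Pθ θ {ω | X 0 ω = 0}) ^ n ∂(P.map Θ)
          ≤ ∫⁻ _, 1 ∂(P.map Θ) := lintegral_mono fun θ => by
            haveI := hPθprob θ; exact pow_le_one' prob_le_one n
        _ = 1 := by simp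
    rw [← hint _ (hSPmeas 0), hlin, ENNReal.tsum_toReal_eq (fun n =>
      ENNReal.mul_ne_top (measure_ne_top _ _)
        (lt_of_le_of_lt (hle1 n) ENNReal.one_lt_top).ne)]
    refine tsum_congr fun n => ?_
    rw [ENNReal.toReal_mul]
    congr 1
    rw [show (fun θ => ((Pθ θ {ω | X 0 ω = 0}).toReal) ^ n)
        = fun θ => ((Pθ θ {ω | X 0 ω = 0}) ^ n).toReal
      from funext fun θ => (ENNReal.toReal_pow _ _).symm]
    exact (integral_toReal (hpm n).aemeasurable (ae_of_all _ fun θ =>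
      lt_of_le_of_lt (by haveI := hPθprob θ; exact pow_le_one' prob_le_one n)
        ENNReal.one_lt_top)).symm
  · -- second conclusion
    intro x hx
    by_cases hA : a ≤ 1
    · -- main case
      have hrec : ∀ᵐ θ ∂(P.map Θ),
          (Pθ θ {ω | (∑ j ∈ Finset.range (N ω), X j ω) = x}).toReal
            = ∑ y ∈ Finset.Icc 1 x, (a + b * (y:ℝ) / (x:ℝ)) *
              ((Pθ θ {ω | (∑ j ∈ Finset.range (N ω), X j ω) = x - y}).toReal *
                ((Pθ θ {ω | X 0 ω = y}).toReal
                  / (1 - a * (Pθ θ {ω | X 0 ω = 0}).toReal))) := by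
        filter_upwards [hae] with θ hθ
        obtain ⟨hc1, ⟨hiid, hmap⟩, hInd, hnd⟩ := hθ
        haveI := hPθprob θ
        have hq' : ∀ n : ℕ, 1 ≤ n → ((Pθ θ) {ω | N ω = n}).toReal
            = (a + b / (n:ℝ)) * ((Pθ θ) {ω | N ω = n - 1}).toReal := by
          intro n hn; rw [hc1 n, hc1 (n-1)]; exact hPanjer n hn
        have hcore := panjer_core (Pθ θ) X N a b
          (fun n z => conv_step (Pθ θ) X hX hiid hmap n z)
          (fun n z => sym_step (Pθ θ) X hX hiid hmap n z)
          (fun z => mix_step (Pθ θ) X N hX hN hInd z) hq' x hx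
        have hden : (0:ℝ) < 1 - a * (Pθ θ {ω | X 0 ω = 0}).toReal := by linarith
        have h2 : (Pθ θ {ω | (∑ j ∈ Finset.range (N ω), X j ω) = x}).toReal
            = (∑ y ∈ Finset.Icc 1 x, (a + b * (y:ℝ) / (x:ℝ))
                * ((Pθ θ {ω | X 0 ω = y}).toReal
                  * (Pθ θ {ω | (∑ j ∈ Finset.range (N ω), X j ω) = x - y}).toReal))
              / (1 - a * (Pθ θ {ω | X 0 ω = 0}).toReal) := by
          rw [eq_div_iff hden.ne']; exact hcore
        rw [h2, Finset.sum_div]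
        exact Finset.sum_congr rfl fun y _ => by ring
      have hKmeas : ∀ y : ℕ, Measurable fun θ =>
          (Pθ θ {ω | X 0 ω = y}).toReal
            / (1 - a * (Pθ θ {ω | X 0 ω = 0}).toReal) :=
        fun y => ((hmeas _ (hXset y)).ennreal_toReal).div
          (measurable_const.sub ((hmeas _ (hXset 0)).ennreal_toReal.const_mul a))
      have hIy : ∀ y : ℕ, 1 ≤ y → y ≤ x →
          (∫ ω, Set.indicator {ω' | (∑ j ∈ Finset.range (N ω'), X j ω') = x - y}
              (fun _ => (1 : ℝ)) ω
            * (Pθ (Θ ω) {ω' | X 0 ω' = y}).toReal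
            / (1 - a * (Pθ (Θ ω) {ω' | X 0 ω' = 0}).toReal) ∂P)
          = ∫ θ, (Pθ θ {ω | (∑ j ∈ Finset.range (N ω), X j ω) = x - y}).toReal
              * ((Pθ θ {ω | X 0 ω = y}).toReal
                / (1 - a * (Pθ θ {ω | X 0 ω = 0}).toReal)) ∂(P.map Θ) := by
        intro y hy1 hy2
        have hE : MeasurableSet {ω | (∑ j ∈ Finset.range (N ω), X j ω) = x - y} :=
          hSPmeas (x - y)
        have step1 : (fun ω =>
            Set.indicator {ω' | (∑ j ∈ Finset.range (N ω'), X j ω') = x - y}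
              (fun _ => (1 : ℝ)) ω
            * (Pθ (Θ ω) {ω' | X 0 ω' = y}).toReal
            / (1 - a * (Pθ (Θ ω) {ω' | X 0 ω' = 0}).toReal))
            = fun ω => Set.indicator {ω' | (∑ j ∈ Finset.range (N ω'), X j ω') = x - y}
                (fun ω' => (Pθ (Θ ω') {ω'' | X 0 ω'' = y}).toReal
                  / (1 - a * (Pθ (Θ ω') {ω'' | X 0 ω'' = 0}).toReal)) ω := by
          funext ω
          by_cases hω : ω ∈ {ω' | (∑ j ∈ Finset.range (N ω'), X j ω') = x - y}
          · rw [Set.indicator_of_mem hω, Set.indicator_of_mem hω, one_mul]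
          · rw [Set.indicator_of_notMem hω, Set.indicator_of_notMem hω,
              zero_mul, zero_div]
        rw [step1, integral_indicator hE,
          ← integral_map hΘ.aemeasurable (hKmeas y).aestronglyMeasurable,
          disint P d Θ hΘ Pθ hPθprob hmeas hint hcons _ hE]
        have hρ : (fun θ => Pθ θ {ω | (∑ j ∈ Finset.range (N ω), X j ω) = x - y})
            = fun θ => ((Pθ θ {ω | (∑ j ∈ Finset.range (N ω), X j ω) = x - y}).toNNReal
                : ℝ≥0∞) := by
          funext θ
          haveI := hPθprob θ
          exact (ENNReal.coe_toNNReal (measure_ne_top _ _)).symm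
        rw [hρ, integral_withDensity_eq_integral_smul₀
          (f := fun θ => (Pθ θ {ω | (∑ j ∈ Finset.range (N ω), X j ω) = x - y}).toNNReal)
          (hmeas _ hE).ennreal_toNNReal.aemeasurable]
        refine integral_congr_ae (ae_of_all _ fun θ => ?_)
        simp only [NNReal.smul_def, ENNReal.toReal, smul_eq_mul]
      have hInt : ∀ y : ℕ, 1 ≤ y → y ≤ x →
          Integrable (fun θ =>
            (Pθ θ {ω | (∑ j ∈ Finset.range (N ω), X j ω) = x - y}).toReal
              * ((Pθ θ {ω | X 0 ω = y}).toReal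
                / (1 - a * (Pθ θ {ω | X 0 ω = 0}).toReal))) (P.map Θ) := by
        intro y hy1 hy2
        have hmeasθ : Measurable fun θ =>
            (Pθ θ {ω | (∑ j ∈ Finset.range (N ω), X j ω) = x - y}).toReal
              * ((Pθ θ {ω | X 0 ω = y}).toReal
                / (1 - a * (Pθ θ {ω | X 0 ω = 0}).toReal)) :=
          ((hmeas _ (hSPmeas (x - y))).ennreal_toReal).mul (hKmeas y)
        refine Integrable.mono' (integrable_const (1:ℝ)) hmeasθ.aestronglyMeasurable ?_
        filter_upwards [hae] with θ hθ
        obtain ⟨_, _, _, hnd⟩ := hθ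
        haveI := hPθprob θ
        have hsum_le : (Pθ θ {ω | X 0 ω = 0}).toReal
            + (Pθ θ {ω | X 0 ω = y}).toReal ≤ 1 := by
          have hdisj : Disjoint {ω | X 0 ω = 0} {ω | X 0 ω = y} := by
            rw [Set.disjoint_left]
            intro ω h1 h2
            simp only [Set.mem_setOf_eq] at h1 h2
            omega
          have hu := measure_union (μ := Pθ θ) hdisj (hXset y)
          have hle : Pθ θ ({ω | X 0 ω = 0} ∪ {ω | X 0 ω = y}) ≤ 1 := prob_le_one
          rw [hu] at hle
          calc (Pθ θ {ω | X 0 ω = 0}).toReal + (Pθ θ {ω | X 0 ω = y}).toReal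
              = (Pθ θ {ω | X 0 ω = 0} + Pθ θ {ω | X 0 ω = y}).toReal :=
                (ENNReal.toReal_add (measure_ne_top _ _) (measure_ne_top _ _)).symm
            _ ≤ 1 := by
                rw [← ENNReal.toReal_one]
                exact ENNReal.toReal_mono ENNReal.one_ne_top hle
        obtain ⟨hK0, hK1⟩ := K_bounds a _ _ hA ENNReal.toReal_nonneg
          ENNReal.toReal_nonneg hsum_le hnd
        have hs0 : (0:ℝ) ≤ (Pθ θ {ω | (∑ j ∈ Finset.range (N ω), X j ω) = x - y}).toReal :=
          ENNReal.toReal_nonneg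
        have hs1 : (Pθ θ {ω | (∑ j ∈ Finset.range (N ω), X j ω) = x - y}).toReal ≤ 1 := by
          rw [← ENNReal.toReal_one]
          exact ENNReal.toReal_mono ENNReal.one_ne_top prob_le_one
        rw [Real.norm_eq_abs, abs_of_nonneg (mul_nonneg hs0 hK0)]
        nlinarith
      have hfinal : ∑ y ∈ Finset.Icc 1 x, (a + b * (y : ℝ) / (x : ℝ))
              * ∫ ω, Set.indicator {ω' | (∑ j ∈ Finset.range (N ω'), X j ω') = x - y}
                  (fun _ => (1 : ℝ)) ω
                * (Pθ (Θ ω) {ω' | X 0 ω' = y}).toReal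
                / (1 - a * (Pθ (Θ ω) {ω' | X 0 ω' = 0}).toReal) ∂P
          = (P {ω | (∑ j ∈ Finset.range (N ω), X j ω) = x}).toReal := by
        calc ∑ y ∈ Finset.Icc 1 x, (a + b * (y : ℝ) / (x : ℝ))
              * ∫ ω, Set.indicator {ω' | (∑ j ∈ Finset.range (N ω'), X j ω') = x - y}
                  (fun _ => (1 : ℝ)) ω
                * (Pθ (Θ ω) {ω' | X 0 ω' = y}).toReal
                / (1 - a * (Pθ (Θ ω) {ω' | X 0 ω' = 0}).toReal) ∂P
            = ∑ y ∈ Finset.Icc 1 x, (a + b * (y : ℝ) / (x : ℝ))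
              * ∫ θ, (Pθ θ {ω | (∑ j ∈ Finset.range (N ω), X j ω) = x - y}).toReal
                  * ((Pθ θ {ω | X 0 ω = y}).toReal
                    / (1 - a * (Pθ θ {ω | X 0 ω = 0}).toReal)) ∂(P.map Θ) := by
              refine Finset.sum_congr rfl fun y hy => ?_
              obtain ⟨hy1, hy2⟩ := Finset.mem_Icc.mp hy
              rw [hIy y hy1 hy2]
          _ = ∑ y ∈ Finset.Icc 1 x, ∫ θ, (a + b * (y : ℝ) / (x : ℝ))
              * ((Pθ θ {ω | (∑ j ∈ Finset.range (N ω), X j ω) = x - y}).toReal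
                  * ((Pθ θ {ω | X 0 ω = y}).toReal
                    / (1 - a * (Pθ θ {ω | X 0 ω = 0}).toReal))) ∂(P.map Θ) := by
              exact Finset.sum_congr rfl fun y hy => (integral_const_mul _ _).symm
          _ = ∫ θ, ∑ y ∈ Finset.Icc 1 x, (a + b * (y : ℝ) / (x : ℝ))
              * ((Pθ θ {ω | (∑ j ∈ Finset.range (N ω), X j ω) = x - y}).toReal
                  * ((Pθ θ {ω | X 0 ω = y}).toReal
                    / (1 - a * (Pθ θ {ω | X 0 ω = 0}).toReal))) ∂(P.map Θ) := by
              refine (integral_finset_sum _ fun y hy => ?_).symm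
              obtain ⟨hy1, hy2⟩ := Finset.mem_Icc.mp hy
              exact (hInt y hy1 hy2).const_mul _
          _ = ∫ θ, (Pθ θ {ω | (∑ j ∈ Finset.range (N ω), X j ω) = x}).toReal ∂(P.map Θ) := by
              refine integral_congr_ae ?_
              filter_upwards [hrec] with θ heq
              exact heq.symm
          _ = (∫⁻ θ, Pθ θ {ω | (∑ j ∈ Finset.range (N ω), X j ω) = x} ∂(P.map Θ)).toReal :=
              integral_toReal (hmeas _ (hSPmeas x)).aemeasurable
                (ae_of_all _ fun θ => by haveI := hPθprob θ; exact measure_lt_top _ _)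
          _ = (P {ω | (∑ j ∈ Finset.range (N ω), X j ω) = x}).toReal := by
              rw [hint _ (hSPmeas x)]
      exact hfinal.symm
    · -- degenerate case a > 1
      push_neg at hA
      obtain ⟨hzero, hab⟩ := panjer_degenerate P N hN a b hPanjer hA
      have hSzero : ∀ z : ℕ, 1 ≤ z →
          P {ω | (∑ j ∈ Finset.range (N ω), X j ω) = z} = 0 := by
        intro z hz
        have hsub : {ω | (∑ j ∈ Finset.range (N ω), X j ω) = z}
            ⊆ ⋃ n : ℕ, {ω | N ω = n + 1} := by
          intro ω hω
          simp only [Set.mem_setOf_eq] at hω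
          simp only [Set.mem_iUnion, Set.mem_setOf_eq]
          rcases Nat.exists_eq_succ_of_ne_zero (show N ω ≠ 0 by
            intro h0
            rw [h0] at hω
            simp only [Finset.range_zero, Finset.sum_empty] at hω
            omega) with ⟨n, hn⟩
          exact ⟨n, hn⟩
        exact measure_mono_null hsub
          (measure_iUnion_null fun n => hzero (n + 1) (by omega))
      rw [hSzero x hx, ENNReal.toReal_zero]
      symm
      apply Finset.sum_eq_zero
      intro y hy
      obtain ⟨hy1, hy2⟩ := Finset.mem_Icc.mp hy
      rcases eq_or_lt_of_le hy2 with heq | hlt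
      · subst heq
        have hyne : ((y:ℕ):ℝ) ≠ 0 := Nat.cast_ne_zero.mpr (by omega)
        have hcoef : a + b * (y : ℝ) / (y : ℝ) = 0 := by
          rw [mul_div_assoc, div_self hyne, mul_one]
          exact hab
        rw [hcoef, zero_mul]
      · have hP0 : P {ω' | (∑ j ∈ Finset.range (N ω'), X j ω') = x - y} = 0 :=
          hSzero (x - y) (by omega)
        have hae0 : ∀ᵐ ω ∂P, ω ∉ {ω' | (∑ j ∈ Finset.range (N ω'), X j ω') = x - y} := by
          rw [ae_iff]
          simpa using hP0
        have hint0 : (∫ ω, Set.indicator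
              {ω' | (∑ j ∈ Finset.range (N ω'), X j ω') = x - y} (fun _ => (1 : ℝ)) ω
            * (Pθ (Θ ω) {ω' | X 0 ω' = y}).toReal
            / (1 - a * (Pθ (Θ ω) {ω' | X 0 ω' = 0}).toReal) ∂P) = 0 := by
          rw [← integral_zero Ω ℝ (μ := P)]
          refine integral_congr_ae ?_
          filter_upwards [hae0] with ω hω
          have h0 : Set.indicator {ω' | (∑ j ∈ Finset.range (N ω'), X j ω') = x - y}
              (fun _ => (1:ℝ)) ω = 0 :=
            Set.indicator_of_notMem
              (s := {ω' | (∑ j ∈ Finset.range (N ω'), X j ω') = x - y}) hω _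
          rw [h0, zero_mul, zero_div]
        rw [hint0, mul_zero]
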